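/- Let f₀, f₁, f₂ be non-negative integrable functions on a probability space and B₁, B₂ sub-σ-algebras. Then ∫ f₀ · E[f₁|B₁] · E[f₂|B₂] dμ ≥ (∫ f₀^{1/3} f₁^{1/3} f₂^{1/3} dμ)^3. -/

import Mathlib

open MeasureTheory

/-- If `f ≥ 0` is integrable, then a.e. on the set where `E[f|m] ≤ 0` we have `f = 0`. -/
lemma chu_aux_zero {X : Type*} {m : MeasurableSpace X} [m0 : MeasurableSpace X] (μ : Measure X)
    [IsFiniteMeasure μ] (hm : m ≤ m0) {f : X → ℝ} (hf : Integrable f μ)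
    (h : ∀ x, 0 ≤ f x) :
    ∀ᵐ x ∂μ, (μ[f|m]) x ≤ 0 → f x = 0 := by
  set s : Set X := {x | (μ[f|m]) x ≤ 0} with hs_def
  have hs : MeasurableSet[m] s :=
    measurableSet_le stronglyMeasurable_condExp.measurable measurable_const
  have h1 : ∫ x in s, f x ∂μ = ∫ x in s, (μ[f|m]) x ∂μ := (setIntegral_condExp hm hf hs).symm
  have h2 : ∫ x in s, (μ[f|m]) x ∂μ ≤ 0 := by
    apply integral_nonpos_of_ae
    filter_upwards [ae_restrict_mem (hm _ hs)] with x hx using hx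
  have h3 : ∫ x in s, f x ∂μ = 0 :=
    le_antisymm (h1 ▸ h2) (integral_nonneg fun x => h x)
  have h4 : f =ᵐ[μ.restrict s] 0 := by
    have := (integral_eq_zero_iff_of_nonneg (fun x => h x) hf.integrableOn).mp h3
    exact this
  have := (ae_restrict_iff' (hm _ hs)).mp h4
  filter_upwards [this] with x hx hx' using hx hx'

/-- Key bound: `∫⁻ f / E[f|m] ≤ 1` on a probability space. -/
lemma chu_aux_div {X : Type*} {m : MeasurableSpace X} [m0 : MeasurableSpace X] (μ : Measure X)
    [IsProbabilityMeasure μ] (hm : m ≤ m0) {f : X → ℝ} (hf : Integrable f μ)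
    (h : ∀ x, 0 ≤ f x) :
    ∫⁻ x, ENNReal.ofReal (f x) * (ENNReal.ofReal ((μ[f|m]) x))⁻¹ ∂μ ≤ 1 := by
  set E : X → ℝ := μ[f|m] with hE_def
  have hE_sm : StronglyMeasurable[m] E := stronglyMeasurable_condExp
  have hE_meas : Measurable E := (hE_sm.mono hm).measurable
  have hE_nonneg : 0 ≤ᵐ[μ] E := condExp_nonneg (Filter.Eventually.of_forall h)
  have hzero := chu_aux_zero μ hm hf h
  -- the truncated functions
  set φ : ℕ → X → ENNReal := fun n x =>
    ENNReal.ofReal (f x) * min (ENNReal.ofReal (E x))⁻¹ (n : ENNReal) with hφ_def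
  have hF_meas : AEMeasurable (fun x => ENNReal.ofReal (f x)) μ :=
    ENNReal.measurable_ofReal.comp_aemeasurable hf.aestronglyMeasurable.aemeasurable
  have hφ_meas : ∀ n, AEMeasurable (φ n) μ := fun n =>
    hF_meas.mul ((((ENNReal.measurable_ofReal.comp hE_meas).inv).min measurable_const).aemeasurable)
  have hφ_mono : ∀ᵐ x ∂μ, Monotone fun n => φ n x := by
    refine Filter.Eventually.of_forall fun x i j hij => ?_
    exact mul_le_mul_right (min_le_min le_rfl (by exact_mod_cast Nat.cast_le.mpr hij)) _
  -- each truncation has integral ≤ 1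
  have hφ_le : ∀ n : ℕ, ∫⁻ x, φ n x ∂μ ≤ 1 := by
    intro n
    set g : X → ℝ := fun x => min |E x|⁻¹ (n : ℝ) with hg_def
    have hg_nonneg : ∀ x, 0 ≤ g x := fun x =>
      le_min (inv_nonneg.mpr (abs_nonneg _)) (Nat.cast_nonneg _)
    have hg_bdd : ∀ x, ‖g x‖ ≤ (n : ℝ) := fun x => by
      rw [Real.norm_eq_abs, abs_of_nonneg (hg_nonneg x)]; exact min_le_right _ _
    have hg_sm : StronglyMeasurable[m] g := by
      letI : MeasurableSpace X := m
      exact ((hE_sm.measurable.abs.inv).min measurable_const).stronglyMeasurable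
    have hgf_int : Integrable (g * f) μ :=
      hf.bdd_mul ((hg_sm.mono hm).aestronglyMeasurable) (c := (n : ℝ)) (Filter.Eventually.of_forall hg_bdd)
    -- φ n agrees a.e. with ofReal (g * f)
    have hae : φ n =ᵐ[μ] fun x => ENNReal.ofReal ((g * f) x) := by
      filter_upwards [hE_nonneg, hzero] with x hEx hzx
      rcases eq_or_lt_of_le hEx with hE0 | hEpos
      · have hfx : f x = 0 := hzx (le_of_eq hE0.symm)
        simp [hφ_def, hg_def, hfx]
      · have habs : |E x| = E x := abs_of_pos hEpos
        have h1 : (ENNReal.ofReal (E x))⁻¹ = ENNReal.ofReal (E x)⁻¹ :=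
          (ENNReal.ofReal_inv_of_pos hEpos).symm
        have h2 : min (ENNReal.ofReal (E x)⁻¹) ((n : ENNReal)) = ENNReal.ofReal (g x) := by
          rw [hg_def]
          simp only [habs]
          rw [← ENNReal.ofReal_natCast n]
          exact (Monotone.map_min fun a b hab => ENNReal.ofReal_le_ofReal hab).symm
        simp only [hφ_def, h1, h2, Pi.mul_apply]
        rw [← ENNReal.ofReal_mul (h x), mul_comm (f x)]
    rw [lintegral_congr_ae hae]
    -- compute the real integral
    have hgf_nonneg : 0 ≤ᵐ[μ] g * f :=
      Filter.Eventually.of_forall fun x => mul_nonneg (hg_nonneg x) (h x)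
    rw [← ofReal_integral_eq_lintegral_ofReal hgf_int hgf_nonneg]
    have hmul : μ[g * f|m] =ᵐ[μ] g * E :=
      condExp_stronglyMeasurable_mul_of_bound hm hg_sm hf (n : ℝ)
        (Filter.Eventually.of_forall hg_bdd)
    have hgE_int : Integrable (g * E) μ :=
      integrable_condExp.bdd_mul ((hg_sm.mono hm).aestronglyMeasurable) (c := (n : ℝ)) (Filter.Eventually.of_forall hg_bdd)
    have h5 : ∫ x, (g * f) x ∂μ = ∫ x, (g * E) x ∂μ := by
      rw [← integral_condExp hm (μ := μ) (f := g * f)]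
      exact integral_congr_ae hmul
    have h6 : ∫ x, (g * E) x ∂μ ≤ 1 := by
      have : ∫ x, (g * E) x ∂μ ≤ ∫ _x, (1 : ℝ) ∂μ := by
        refine integral_mono_ae hgE_int (integrable_const 1) ?_
        filter_upwards [hE_nonneg] with x hEx
        rcases eq_or_lt_of_le hEx with hE0 | hEpos
        · simp [← hE0]
        · have : g x ≤ (E x)⁻¹ := by
            rw [hg_def]; exact min_le_left _ _ |>.trans (by rw [abs_of_pos hEpos])
          calc (g * E) x = g x * E x := rfl
            _ ≤ (E x)⁻¹ * E x := by
                exact mul_le_mul_of_nonneg_right this (le_of_lt hEpos)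
            _ = 1 := inv_mul_cancel₀ (ne_of_gt hEpos)
      simpa using this
    calc ENNReal.ofReal (∫ x, (g * f) x ∂μ) ≤ ENNReal.ofReal 1 :=
          ENNReal.ofReal_le_ofReal (h5 ▸ h6)
      _ = 1 := ENNReal.ofReal_one
  -- monotone convergence
  have hsup : ∀ x, (⨆ n : ℕ, φ n x) =
      ENNReal.ofReal (f x) * (ENNReal.ofReal ((μ[f|m]) x))⁻¹ := by
    intro x
    rw [hφ_def]
    simp only
    rw [← ENNReal.mul_iSup]
    congr 1
    set a : ENNReal := (ENNReal.ofReal (E x))⁻¹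
    refine le_antisymm (iSup_le fun n => min_le_left _ _) ?_
    rcases eq_or_ne a ⊤ with ha | ha
    · rw [ha]
      have : (⨆ n : ℕ, min (⊤ : ENNReal) (n : ENNReal)) = ⨆ n : ℕ, (n : ENNReal) := by
        simp
      rw [this, ENNReal.iSup_natCast]
    · obtain ⟨n, hn⟩ := ENNReal.exists_nat_gt ha
      calc a = min a (n : ENNReal) := (min_eq_left hn.le).symm
        _ ≤ ⨆ n : ℕ, min a (n : ENNReal) := le_iSup (fun n : ℕ => min a (n : ENNReal)) n
  calc ∫⁻ x, ENNReal.ofReal (f x) * (ENNReal.ofReal ((μ[f|m]) x))⁻¹ ∂μ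
      = ∫⁻ x, ⨆ n : ℕ, φ n x ∂μ := by
        refine lintegral_congr fun x => (hsup x).symm
    _ = ⨆ n : ℕ, ∫⁻ x, φ n x ∂μ := lintegral_iSup' hφ_meas hφ_mono
    _ ≤ 1 := iSup_le hφ_le

theorem chu_stmt_aux {X : Type*} {B₁ B₂ : MeasurableSpace X} [m0 : MeasurableSpace X]
    (μ : Measure X) [IsProbabilityMeasure μ] (hB₁ : B₁ ≤ m0) (hB₂ : B₂ ≤ m0)
    (f₀ f₁ f₂ : X → ℝ) (hint₀ : Integrable f₀ μ) (hint₁ : Integrable f₁ μ)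
    (hint₂ : Integrable f₂ μ)
    (h₀ : ∀ x, 0 ≤ f₀ x) (h₁ : ∀ x, 0 ≤ f₁ x) (h₂ : ∀ x, 0 ≤ f₂ x) :
    (∫⁻ x, ENNReal.ofReal (f₀ x ^ ((3 : ℝ))⁻¹ * f₁ x ^ ((3 : ℝ))⁻¹ * f₂ x ^ ((3 : ℝ))⁻¹) ∂μ) ^ 3
      ≤ ∫⁻ x, ENNReal.ofReal (f₀ x * (μ[f₁ | B₁]) x * (μ[f₂ | B₂]) x) ∂μ := by
  set E₁ : X → ℝ := μ[f₁ | B₁] with hE₁_def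
  set E₂ : X → ℝ := μ[f₂ | B₂] with hE₂_def
  set F₀ : X → ENNReal := fun x => ENNReal.ofReal (f₀ x) with hF₀_def
  set F₁ : X → ENNReal := fun x => ENNReal.ofReal (f₁ x) with hF₁_def
  set F₂ : X → ENNReal := fun x => ENNReal.ofReal (f₂ x) with hF₂_def
  set G₁ : X → ENNReal := fun x => ENNReal.ofReal (E₁ x) with hG₁_def
  set G₂ : X → ENNReal := fun x => ENNReal.ofReal (E₂ x) with hG₂_def
  set A : X → ENNReal := fun x => F₀ x * G₁ x * G₂ x with hA_def
  set B : X → ENNReal := fun x => F₁ x * (G₁ x)⁻¹ with hB_def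
  set C : X → ENNReal := fun x => F₂ x * (G₂ x)⁻¹ with hC_def
  have hG₁_meas : Measurable G₁ :=
    ENNReal.measurable_ofReal.comp (stronglyMeasurable_condExp.mono hB₁).measurable
  have hG₂_meas : Measurable G₂ :=
    ENNReal.measurable_ofReal.comp (stronglyMeasurable_condExp.mono hB₂).measurable
  have hF₀_meas : AEMeasurable F₀ μ :=
    ENNReal.measurable_ofReal.comp_aemeasurable hint₀.aestronglyMeasurable.aemeasurable
  have hF₁_meas : AEMeasurable F₁ μ :=
    ENNReal.measurable_ofReal.comp_aemeasurable hint₁.aestronglyMeasurable.aemeasurable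
  have hF₂_meas : AEMeasurable F₂ μ :=
    ENNReal.measurable_ofReal.comp_aemeasurable hint₂.aestronglyMeasurable.aemeasurable
  have hA_meas : AEMeasurable A μ := (hF₀_meas.mul hG₁_meas.aemeasurable).mul hG₂_meas.aemeasurable
  have hB_meas : AEMeasurable B μ := hF₁_meas.mul hG₁_meas.inv.aemeasurable
  have hC_meas : AEMeasurable C μ := hF₂_meas.mul hG₂_meas.inv.aemeasurable
  have hz₁ := chu_aux_zero μ hB₁ hint₁ h₁
  have hz₂ := chu_aux_zero μ hB₂ hint₂ h₂
  -- pointwise inequality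
  have hpt : ∀ᵐ x ∂μ, ENNReal.ofReal (f₀ x ^ ((3:ℝ))⁻¹ * f₁ x ^ ((3:ℝ))⁻¹ * f₂ x ^ ((3:ℝ))⁻¹)
      ≤ A x ^ ((3:ℝ))⁻¹ * B x ^ ((3:ℝ))⁻¹ * C x ^ ((3:ℝ))⁻¹ := by
    filter_upwards [hz₁, hz₂] with x hx1 hx2
    have hlhs : ENNReal.ofReal (f₀ x ^ ((3:ℝ))⁻¹ * f₁ x ^ ((3:ℝ))⁻¹ * f₂ x ^ ((3:ℝ))⁻¹)
        = (F₀ x * F₁ x * F₂ x) ^ ((3:ℝ))⁻¹ := by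
      rw [ENNReal.ofReal_mul (mul_nonneg (Real.rpow_nonneg (h₀ x) _) (Real.rpow_nonneg (h₁ x) _)),
        ENNReal.ofReal_mul (Real.rpow_nonneg (h₀ x) _),
        ← ENNReal.ofReal_rpow_of_nonneg (h₀ x) (by norm_num),
        ← ENNReal.ofReal_rpow_of_nonneg (h₁ x) (by norm_num),
        ← ENNReal.ofReal_rpow_of_nonneg (h₂ x) (by norm_num),
        ENNReal.mul_rpow_of_nonneg _ _ (by norm_num : (0:ℝ) ≤ (3:ℝ)⁻¹),
        ENNReal.mul_rpow_of_nonneg _ _ (by norm_num : (0:ℝ) ≤ (3:ℝ)⁻¹)]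
    rw [hlhs, ← ENNReal.mul_rpow_of_nonneg _ _ (by norm_num : (0:ℝ) ≤ (3:ℝ)⁻¹),
        ← ENNReal.mul_rpow_of_nonneg _ _ (by norm_num : (0:ℝ) ≤ (3:ℝ)⁻¹)]
    refine ENNReal.rpow_le_rpow ?_ (by norm_num)
    by_cases hg1 : G₁ x = 0
    · have : f₁ x = 0 := hx1 (by simpa [hG₁_def, ENNReal.ofReal_eq_zero] using hg1)
      simp [hF₁_def, this]
    by_cases hg2 : G₂ x = 0
    · have : f₂ x = 0 := hx2 (by simpa [hG₂_def, ENNReal.ofReal_eq_zero] using hg2)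
      simp [hF₂_def, this]
    have key : A x * B x * C x
        = F₀ x * F₁ x * F₂ x * (G₁ x * (G₁ x)⁻¹) * (G₂ x * (G₂ x)⁻¹) := by
      rw [hA_def, hB_def, hC_def]; ring
    rw [key, ENNReal.mul_inv_cancel hg1 ENNReal.ofReal_ne_top,
      ENNReal.mul_inv_cancel hg2 ENNReal.ofReal_ne_top, mul_one, mul_one]
  -- Hölder
  have hHolder : ∫⁻ x, A x ^ ((3:ℝ))⁻¹ * B x ^ ((3:ℝ))⁻¹ * C x ^ ((3:ℝ))⁻¹ ∂μ
      ≤ (∫⁻ x, A x ∂μ) ^ ((3:ℝ))⁻¹ * (∫⁻ x, B x ∂μ) ^ ((3:ℝ))⁻¹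
        * (∫⁻ x, C x ∂μ) ^ ((3:ℝ))⁻¹ := by
    have := ENNReal.lintegral_prod_norm_pow_le (μ := μ) (Finset.univ : Finset (Fin 3))
      (f := ![A, B, C]) (p := fun _ => ((3:ℝ))⁻¹)
      (by intro i _
          fin_cases i
          · simpa using hA_meas
          · simpa using hB_meas
          · simpa using hC_meas)
      (by norm_num [Fin.sum_univ_three])
      (fun i _ => by norm_num)
    simpa [Fin.prod_univ_three] using this
  have hB_le : ∫⁻ x, B x ∂μ ≤ 1 := chu_aux_div μ hB₁ hint₁ h₁
  have hC_le : ∫⁻ x, C x ∂μ ≤ 1 := chu_aux_div μ hB₂ hint₂ h₂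
  -- identify ∫ A with the RHS
  have hA_eq : ∫⁻ x, A x ∂μ = ∫⁻ x, ENNReal.ofReal (f₀ x * E₁ x * E₂ x) ∂μ := by
    refine lintegral_congr_ae ?_
    filter_upwards [condExp_nonneg (μ := μ) (m := B₁) (f := f₁) (Filter.Eventually.of_forall h₁),
      condExp_nonneg (μ := μ) (m := B₂) (f := f₂) (Filter.Eventually.of_forall h₂)]
      with x hE₁x hE₂x
    rw [hA_def]
    simp only
    rw [← ENNReal.ofReal_mul (h₀ x), ← ENNReal.ofReal_mul (mul_nonneg (h₀ x) hE₁x)]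
  calc (∫⁻ x, ENNReal.ofReal (f₀ x ^ ((3:ℝ))⁻¹ * f₁ x ^ ((3:ℝ))⁻¹ * f₂ x ^ ((3:ℝ))⁻¹) ∂μ) ^ 3
      ≤ ((∫⁻ x, A x ∂μ) ^ ((3:ℝ))⁻¹ * (∫⁻ x, B x ∂μ) ^ ((3:ℝ))⁻¹
          * (∫⁻ x, C x ∂μ) ^ ((3:ℝ))⁻¹) ^ 3 := by
        refine pow_le_pow_left' ((lintegral_mono_ae hpt).trans hHolder) 3
    _ = (∫⁻ x, A x ∂μ) * (∫⁻ x, B x ∂μ) * (∫⁻ x, C x ∂μ) := by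
        have cube : ∀ y : ENNReal, (y ^ ((3:ℝ))⁻¹) ^ (3:ℕ) = y := fun y => by
          rw [show ((3:ℝ))⁻¹ = (((3:ℕ):ℝ))⁻¹ by norm_num]
          exact ENNReal.rpow_inv_natCast_pow (by norm_num) y
        rw [mul_pow, mul_pow, cube, cube, cube]
    _ ≤ (∫⁻ x, A x ∂μ) * 1 * 1 :=
        mul_le_mul' (mul_le_mul' le_rfl hB_le) hC_le
    _ = ∫⁻ x, ENNReal.ofReal (f₀ x * E₁ x * E₂ x) ∂μ := by rw [mul_one, mul_one, hA_eq]


/-- **Chu's inequality, case n = 2.**  For non-negative integrable `f₀, f₁, f₂` on a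
probability space and sub-σ-algebras `B₁, B₂`:
`∫ f₀ · E[f₁|B₁] · E[f₂|B₂] dμ ≥ (∫ f₀^{1/3} f₁^{1/3} f₂^{1/3} dμ)³`. -/
theorem stmt_2 {X : Type*} [m0 : MeasurableSpace X] (μ : Measure X) [IsProbabilityMeasure μ]
    (B₁ B₂ : MeasurableSpace X) (hB₁ : B₁ ≤ m0) (hB₂ : B₂ ≤ m0)
    (f₀ f₁ f₂ : X → ℝ) (hint₀ : Integrable f₀ μ) (hint₁ : Integrable f₁ μ)
    (hint₂ : Integrable f₂ μ)
    (h₀ : ∀ x, 0 ≤ f₀ x) (h₁ : ∀ x, 0 ≤ f₁ x) (h₂ : ∀ x, 0 ≤ f₂ x) :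
    (∫⁻ x, ENNReal.ofReal (f₀ x ^ ((3 : ℝ))⁻¹ * f₁ x ^ ((3 : ℝ))⁻¹ * f₂ x ^ ((3 : ℝ))⁻¹) ∂μ) ^ 3
      ≤ ∫⁻ x, ENNReal.ofReal (f₀ x * (μ[f₁ | B₁]) x * (μ[f₂ | B₂]) x) ∂μ :=
  @chu_stmt_aux X B₁ B₂ m0 μ ‹_› hB₁ hB₂ f₀ f₁ f₂ hint₀ hint₁ hint₂ h₀ h₁ h₂
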